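/- Let uv be an edge of a finite simple graph G and let H be the 3-subdivision of uv, with new vertices u′, w, v′. Then: (i) if v belongs to some minimum dominating set of G, then u′ belongs to some minimum dominating set of H; (ii) if u belongs to some minimum dominating set of G, then v′ belongs to some minimum dominating set of H; (iii) if the edge uv is not γ-critical in G (i.e., γ(G − uv) = γ(G)), then w belongs to some minimum dominating set of H. -/
import Mathlib


open SimpleGraph

/-- `S` is a dominating set of `G`. -/
def IsDomSet {V : Type*} (G : SimpleGraph V) (S : Finset V) : Prop :=
  ∀ v : V, v ∈ S ∨ ∃ u ∈ S, G.Adj u v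

/-- The domination number `γ(G)`. -/
noncomputable def domNum {V : Type*} (G : SimpleGraph V) : ℕ :=
  sInf {n | ∃ S : Finset V, IsDomSet G S ∧ S.card = n}

/-- `C` is a vertex cover of `G`. -/
def IsVC {V : Type*} (G : SimpleGraph V) (C : Finset V) : Prop :=
  ∀ e ∈ G.edgeSet, ∃ x ∈ C, x ∈ e

/-- The vertex cover number `τ(G)`. -/
noncomputable def tau {V : Type*} (G : SimpleGraph V) : ℕ :=
  sInf {n | ∃ C : Finset V, IsVC G C ∧ C.card = n}

/-- `S` is an independent set of `G`. -/
def IsIndep {V : Type*} (G : SimpleGraph V) (S : Finset V) : Prop :=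
  ∀ a ∈ S, ∀ b ∈ S, ¬ G.Adj a b

/-- The independence number `α(G)`. -/
noncomputable def indepNum {V : Type*} (G : SimpleGraph V) : ℕ :=
  sSup {n | ∃ S : Finset V, IsIndep G S ∧ S.card = n}

/-- The bondage number `b(G)`. -/
noncomputable def bondage {V : Type*} (G : SimpleGraph V) : ℕ :=
  sInf {n | ∃ E' : Finset (Sym2 V), ↑E' ⊆ G.edgeSet ∧ E'.card = n ∧
    domNum (G.deleteEdges ↑E') = domNum G + 1}

/-- The graph `G_v+u` obtained from `G` by adding one new vertex (`none`) adjacent only to `v`. -/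
def addLeaf {V : Type*} (G : SimpleGraph V) (v : V) : SimpleGraph (Option V) :=
  SimpleGraph.fromRel (fun x y =>
    (∃ a b, x = some a ∧ y = some b ∧ G.Adj a b) ∨ (x = some v ∧ y = none))

/-- The graph `G_A+` obtained from `G` by adding, for each `v ∈ A`, one new pendant
vertex adjacent only to `v`. -/
def addLeaves {V : Type*} (G : SimpleGraph V) (A : Finset V) :
    SimpleGraph (V ⊕ {x // x ∈ A}) :=
  SimpleGraph.fromRel (fun x y =>
    (∃ a b, x = Sum.inl a ∧ y = Sum.inl b ∧ G.Adj a b) ∨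
    (∃ a : {x // x ∈ A}, x = Sum.inl a.1 ∧ y = Sum.inr a))

/-- The `3`-subdivision of the edge `uv` of `G`: the edge `uv` is deleted, three new
vertices `u' = Sum.inr 0`, `w = Sum.inr 1`, `v' = Sum.inr 2` are added, together with the
four edges `u u'`, `u' w`, `w v'`, `v' v`. -/
def subdiv3 {V : Type*} (G : SimpleGraph V) (u v : V) : SimpleGraph (V ⊕ Fin 3) :=
  SimpleGraph.fromRel (fun x y =>
    match x, y with
    | Sum.inl a, Sum.inl b => G.Adj a b ∧ s(a, b) ≠ s(u, v)
    | Sum.inl a, Sum.inr i => (a = u ∧ i = 0) ∨ (a = v ∧ i = 2)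
    | Sum.inr i, Sum.inr j => (i = 0 ∧ j = 1) ∨ (i = 1 ∧ j = 2)
    | _, _ => False)

set_option linter.unusedSectionVars false

section Aux
variable {V : Type*} [Fintype V] [DecidableEq V] (G : SimpleGraph V) (u v : V)

lemma exists_min_domSet : ∃ S : Finset V, IsDomSet G S ∧ S.card = domNum G := by
  have h : domNum G ∈ {n | ∃ S : Finset V, IsDomSet G S ∧ S.card = n} :=
    Nat.sInf_mem ⟨Finset.univ.card, Finset.univ, fun x => Or.inl (Finset.mem_univ x), rfl⟩
  obtain ⟨S, hS, hc⟩ := h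
  exact ⟨S, hS, hc⟩

lemma domNum_le' {S : Finset V} (h : IsDomSet G S) : domNum G ≤ S.card :=
  Nat.sInf_le ⟨S, h, rfl⟩

lemma subdiv3_adj_ll {a b : V} :
    (subdiv3 G u v).Adj (Sum.inl a) (Sum.inl b) ↔ G.Adj a b ∧ s(a, b) ≠ s(u, v) := by
  simp only [subdiv3, fromRel_adj]
  constructor
  · rintro ⟨hne, h | h⟩
    · exact h
    · exact ⟨h.1.symm, by rw [Sym2.eq_swap]; exact h.2⟩
  · rintro ⟨h1, h2⟩
    exact ⟨by simp [h1.ne], Or.inl ⟨h1, h2⟩⟩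

lemma subdiv3_adj_lr {a : V} {i : Fin 3} :
    (subdiv3 G u v).Adj (Sum.inl a) (Sum.inr i) ↔ (a = u ∧ i = 0) ∨ (a = v ∧ i = 2) := by
  simp only [subdiv3, fromRel_adj]
  constructor
  · rintro ⟨-, h | h⟩
    · exact h
    · exact absurd h id
  · intro h
    exact ⟨by simp, Or.inl h⟩

lemma subdiv3_adj_rr {i j : Fin 3} :
    (subdiv3 G u v).Adj (Sum.inr i) (Sum.inr j) ↔
      ((i = 0 ∧ j = 1) ∨ (i = 1 ∧ j = 2) ∨ (i = 1 ∧ j = 0) ∨ (i = 2 ∧ j = 1)) := by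
  simp only [subdiv3, fromRel_adj]
  constructor
  · rintro ⟨hne, h | h⟩ <;> tauto
  · intro h
    have hij : i ≠ j := by
      rcases h with ⟨rfl, rfl⟩ | ⟨rfl, rfl⟩ | ⟨rfl, rfl⟩ | ⟨rfl, rfl⟩ <;> decide
    exact ⟨by simpa using hij, by tauto⟩

end Aux

section Low
variable {V : Type*} [Fintype V] [DecidableEq V] (G : SimpleGraph V) (u v : V)

lemma subdiv3_lower (huv : G.Adj u v) {T : Finset (V ⊕ Fin 3)}
    (hT : IsDomSet (subdiv3 G u v) T) : domNum G + 1 ≤ T.card := by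
  set T' : Finset V := T.toLeft with hT'
  set R : Finset (Fin 3) := T.toRight with hR
  have hcard : T'.card + R.card = T.card := Finset.card_toLeft_add_card_toRight (u := T)
  have hRne : R.Nonempty := by
    rcases hT (Sum.inr 1) with h | ⟨y, hy, hadj⟩
    · exact ⟨1, Finset.mem_toRight.mpr h⟩
    · match y with
      | Sum.inl a =>
        rw [subdiv3_adj_lr] at hadj
        rcases hadj with ⟨-, h0⟩ | ⟨-, h0⟩ <;> exact absurd h0 (by decide)
      | Sum.inr i =>
        exact ⟨i, Finset.mem_toRight.mpr hy⟩
  by_cases h2 : 2 ≤ R.card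
  · have hdom : IsDomSet G (insert u T') := by
      intro x
      rcases hT (Sum.inl x) with h | ⟨y, hy, hadj⟩
      · exact Or.inl (Finset.mem_insert_of_mem (Finset.mem_toLeft.mpr h))
      · match y with
        | Sum.inl z =>
          rw [subdiv3_adj_ll] at hadj
          exact Or.inr ⟨z, Finset.mem_insert_of_mem (Finset.mem_toLeft.mpr hy), hadj.1⟩
        | Sum.inr i =>
          rw [← (subdiv3 G u v).adj_comm, subdiv3_adj_lr] at hadj
          rcases hadj with ⟨hxu, -⟩ | ⟨hxv, -⟩
          · exact Or.inl (by rw [hxu]; exact Finset.mem_insert_self u T')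
          · exact Or.inr ⟨u, Finset.mem_insert_self u T', by rw [hxv]; exact huv⟩
    have := domNum_le' G hdom
    have hci := Finset.card_insert_le u T'
    omega
  · have hR1 : R.card = 1 := by
      have := Finset.card_pos.mpr hRne
      omega
    obtain ⟨i₀, hi₀⟩ := Finset.card_eq_one.mp hR1
    have hmem : ∀ j : Fin 3, Sum.inr j ∈ T → j = i₀ := by
      intro j hj
      have : j ∈ R := Finset.mem_toRight.mpr hj
      rw [hi₀] at this
      exact Finset.mem_singleton.mp this
    have hdom : IsDomSet G T' := by
      intro x
      rcases hT (Sum.inl x) with h | ⟨y, hy, hadj⟩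
      · exact Or.inl (Finset.mem_toLeft.mpr h)
      · match y with
        | Sum.inl z =>
          rw [subdiv3_adj_ll] at hadj
          exact Or.inr ⟨z, Finset.mem_toLeft.mpr hy, hadj.1⟩
        | Sum.inr i =>
          have hii : i = i₀ := hmem i hy
          rw [← (subdiv3 G u v).adj_comm, subdiv3_adj_lr] at hadj
          rcases hadj with ⟨hxu, hi0⟩ | ⟨hxv, hi2⟩
          · have h0 : i₀ = 0 := by rw [← hii, hi0]
            have hv : v ∈ T' := by
              rcases hT (Sum.inr 2) with h | ⟨y2, hy2, hadj2⟩
              · have := hmem 2 h; rw [h0] at this; exact absurd this (by decide)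
              · match y2 with
                | Sum.inl a =>
                  rw [subdiv3_adj_lr] at hadj2
                  rcases hadj2 with ⟨-, hbad⟩ | ⟨rfl, -⟩
                  · exact absurd hbad (by decide)
                  · exact Finset.mem_toLeft.mpr hy2
                | Sum.inr j =>
                  have hj : j = 0 := (hmem j hy2).trans h0
                  rw [subdiv3_adj_rr, hj] at hadj2
                  exact absurd hadj2 (by decide)
            exact Or.inr ⟨v, hv, by rw [hxu]; exact huv.symm⟩
          · have h2' : i₀ = 2 := by rw [← hii, hi2]
            have hu : u ∈ T' := by
              rcases hT (Sum.inr 0) with h | ⟨y2, hy2, hadj2⟩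
              · have := hmem 0 h; rw [h2'] at this; exact absurd this (by decide)
              · match y2 with
                | Sum.inl a =>
                  rw [subdiv3_adj_lr] at hadj2
                  rcases hadj2 with ⟨rfl, -⟩ | ⟨-, hbad⟩
                  · exact Finset.mem_toLeft.mpr hy2
                  · exact absurd hbad (by decide)
                | Sum.inr j =>
                  have hj : j = 2 := (hmem j hy2).trans h2'
                  rw [subdiv3_adj_rr, hj] at hadj2
                  exact absurd hadj2 (by decide)
            exact Or.inr ⟨u, hu, by rw [hxv]; exact huv⟩
    have := domNum_le' G hdom
    omega

end Low

/-- Let `H` be the `3`-subdivision of the edge `uv` of `G`, with new vertices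
`u' = Sum.inr 0`, `w = Sum.inr 1`, `v' = Sum.inr 2`. Then:
(i) if `v` is in some minimum dominating set of `G`, then `u'` is in some minimum
dominating set of `H`; (ii) if `u` is in some minimum dominating set of `G`, then `v'`
is in some minimum dominating set of `H`; (iii) if `uv` is not `γ`-critical in `G`,
then `w` is in some minimum dominating set of `H`. -/
theorem stmt9 {V : Type*} [Fintype V] [DecidableEq V] (G : SimpleGraph V)
    (u v : V) (huv : G.Adj u v) :
    ((∃ S : Finset V, IsDomSet G S ∧ S.card = domNum G ∧ v ∈ S) →
      ∃ T : Finset (V ⊕ Fin 3), IsDomSet (subdiv3 G u v) T ∧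
        T.card = domNum (subdiv3 G u v) ∧ (Sum.inr 0 : V ⊕ Fin 3) ∈ T) ∧
    ((∃ S : Finset V, IsDomSet G S ∧ S.card = domNum G ∧ u ∈ S) →
      ∃ T : Finset (V ⊕ Fin 3), IsDomSet (subdiv3 G u v) T ∧
        T.card = domNum (subdiv3 G u v) ∧ (Sum.inr 2 : V ⊕ Fin 3) ∈ T) ∧
    (domNum (G.deleteEdges {s(u, v)}) = domNum G →
      ∃ T : Finset (V ⊕ Fin 3), IsDomSet (subdiv3 G u v) T ∧
        T.card = domNum (subdiv3 G u v) ∧ (Sum.inr 1 : V ⊕ Fin 3) ∈ T) := by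
  have key : ∀ T : Finset (V ⊕ Fin 3), IsDomSet (subdiv3 G u v) T →
      T.card = domNum G + 1 → T.card = domNum (subdiv3 G u v) := by
    intro T hT hc
    obtain ⟨M, hM, hMc⟩ := exists_min_domSet (subdiv3 G u v)
    have h1 := subdiv3_lower G u v huv hM
    have h2 := domNum_le' _ hT
    omega
  have hins : ∀ (k : Fin 3) (S : Finset V),
      (insert (Sum.inr k) (S.image Sum.inl) : Finset (V ⊕ Fin 3)).card = S.card + 1 := by
    intro k S
    rw [Finset.card_insert_of_notMem (by simp),
      Finset.card_image_of_injective _ Sum.inl_injective]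
  refine ⟨?_, ?_, ?_⟩
  · rintro ⟨S, hS, hcard, hvS⟩
    have hdomT : IsDomSet (subdiv3 G u v) (insert (Sum.inr 0) (S.image Sum.inl)) := by
      intro x
      match x with
      | Sum.inl a =>
        rcases hS a with h | ⟨z, hz, hadj⟩
        · exact Or.inl (Finset.mem_insert_of_mem (Finset.mem_image_of_mem _ h))
        · by_cases he : s(z, a) = s(u, v)
          · rw [Sym2.eq_iff] at he
            rcases he with ⟨hzu, hav⟩ | ⟨hzv, hau⟩
            · exact Or.inl (Finset.mem_insert_of_mem
                (Finset.mem_image_of_mem _ (by rw [hav]; exact hvS)))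
            · exact Or.inr ⟨Sum.inr 0, Finset.mem_insert_self _ _,
                ((subdiv3_adj_lr G u v).mpr (Or.inl ⟨hau, rfl⟩)).symm⟩
          · exact Or.inr ⟨Sum.inl z, Finset.mem_insert_of_mem (Finset.mem_image_of_mem _ hz),
              (subdiv3_adj_ll G u v).mpr ⟨hadj, he⟩⟩
      | Sum.inr i =>
        fin_cases i
        · exact Or.inl (Finset.mem_insert_self _ _)
        · exact Or.inr ⟨Sum.inr 0, Finset.mem_insert_self _ _,
            (subdiv3_adj_rr G u v).mpr (by decide)⟩
        · exact Or.inr ⟨Sum.inl v, Finset.mem_insert_of_mem (Finset.mem_image_of_mem _ hvS),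
            (subdiv3_adj_lr G u v).mpr (Or.inr ⟨rfl, rfl⟩)⟩
    exact ⟨insert (Sum.inr 0) (S.image Sum.inl), hdomT,
      key _ hdomT (by rw [hins, hcard]), Finset.mem_insert_self _ _⟩
  · rintro ⟨S, hS, hcard, huS⟩
    have hdomT : IsDomSet (subdiv3 G u v) (insert (Sum.inr 2) (S.image Sum.inl)) := by
      intro x
      match x with
      | Sum.inl a =>
        rcases hS a with h | ⟨z, hz, hadj⟩
        · exact Or.inl (Finset.mem_insert_of_mem (Finset.mem_image_of_mem _ h))
        · by_cases he : s(z, a) = s(u, v)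
          · rw [Sym2.eq_iff] at he
            rcases he with ⟨hzu, hav⟩ | ⟨hzv, hau⟩
            · exact Or.inr ⟨Sum.inr 2, Finset.mem_insert_self _ _,
                ((subdiv3_adj_lr G u v).mpr (Or.inr ⟨hav, rfl⟩)).symm⟩
            · exact Or.inl (Finset.mem_insert_of_mem
                (Finset.mem_image_of_mem _ (by rw [hau]; exact huS)))
          · exact Or.inr ⟨Sum.inl z, Finset.mem_insert_of_mem (Finset.mem_image_of_mem _ hz),
              (subdiv3_adj_ll G u v).mpr ⟨hadj, he⟩⟩
      | Sum.inr i =>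
        fin_cases i
        · exact Or.inr ⟨Sum.inl u, Finset.mem_insert_of_mem (Finset.mem_image_of_mem _ huS),
            (subdiv3_adj_lr G u v).mpr (Or.inl ⟨rfl, rfl⟩)⟩
        · exact Or.inr ⟨Sum.inr 2, Finset.mem_insert_self _ _,
            (subdiv3_adj_rr G u v).mpr (by decide)⟩
        · exact Or.inl (Finset.mem_insert_self _ _)
    exact ⟨insert (Sum.inr 2) (S.image Sum.inl), hdomT,
      key _ hdomT (by rw [hins, hcard]), Finset.mem_insert_self _ _⟩
  · intro hcrit
    obtain ⟨S, hS, hcard⟩ := exists_min_domSet (G.deleteEdges {s(u, v)})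
    have hdomT : IsDomSet (subdiv3 G u v) (insert (Sum.inr 1) (S.image Sum.inl)) := by
      intro x
      match x with
      | Sum.inl a =>
        rcases hS a with h | ⟨z, hz, hadj⟩
        · exact Or.inl (Finset.mem_insert_of_mem (Finset.mem_image_of_mem _ h))
        · rw [SimpleGraph.deleteEdges_adj] at hadj
          exact Or.inr ⟨Sum.inl z, Finset.mem_insert_of_mem (Finset.mem_image_of_mem _ hz),
            (subdiv3_adj_ll G u v).mpr ⟨hadj.1, by simpa using hadj.2⟩⟩
      | Sum.inr i =>
        fin_cases i
        · exact Or.inr ⟨Sum.inr 1, Finset.mem_insert_self _ _,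
            (subdiv3_adj_rr G u v).mpr (by decide)⟩
        · exact Or.inl (Finset.mem_insert_self _ _)
        · exact Or.inr ⟨Sum.inr 1, Finset.mem_insert_self _ _,
            (subdiv3_adj_rr G u v).mpr (by decide)⟩
    exact ⟨insert (Sum.inr 1) (S.image Sum.inl), hdomT,
      key _ hdomT (by rw [hins, hcard, hcrit]), Finset.mem_insert_self _ _⟩
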